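/- Let (φ_λ)_{λ∈Λ}, with Λ finite, be an orthonormal basis of ℝ^n, let Y ∈ ℝ^n, let q_λ > 0 for each λ ∈ Λ, and let r ∈ (0, ∞). Then the soft-thresholding estimator β̂ = Σ_{λ∈Λ} η^soft(⟨φ_λ, Y⟩, q_λ) φ_λ is the unique solution of: minimize Σ_{λ∈Λ} |⟨φ_λ, β⟩|^r over β ∈ ℝ^n subject to max_{λ∈Λ} |⟨φ_λ, Y − β⟩| / q_λ ≤ 1. -/

import Mathlib

/-- The soft-thresholding function `η^soft(x, q) = sign(x) · max(|x| − q, 0)`. -/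
noncomputable def etaSoft (x q : ℝ) : ℝ := Real.sign x * max (|x| - q) 0

lemma etaSoft_of_le {x q : ℝ} (h : |x| ≤ q) : etaSoft x q = 0 := by
  unfold etaSoft
  rw [max_eq_right (by linarith), mul_zero]

lemma etaSoft_pos {x q : ℝ} (hx : 0 < x) (h : q < |x|) : etaSoft x q = x - q := by
  unfold etaSoft
  rw [Real.sign_of_pos hx, abs_of_pos hx] at *
  rw [max_eq_left (by linarith), one_mul]

lemma etaSoft_neg {x q : ℝ} (hx : x < 0) (h : q < |x|) : etaSoft x q = x + q := by
  unfold etaSoft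
  rw [Real.sign_of_neg hx, abs_of_neg hx] at *
  rw [max_eq_left (by linarith)]; ring

lemma etaSoft_feas {x q : ℝ} (hq : 0 < q) : |x - etaSoft x q| ≤ q := by
  rcases le_or_gt |x| q with h | h
  · rw [etaSoft_of_le h, sub_zero]; exact h
  · rcases lt_trichotomy x 0 with hx | hx | hx
    · rw [etaSoft_neg hx h]; simp [abs_of_nonpos, hq.le]
    · simp [hx, abs_of_nonneg hq.le] at h; linarith
    · rw [etaSoft_pos hx h]; simp [abs_of_nonneg hq.le]

lemma etaSoft_min {x q b : ℝ} (hq : 0 < q) (hfeas : |x - b| ≤ q)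
    (hne : b ≠ etaSoft x q) : |etaSoft x q| < |b| := by
  rw [abs_le] at hfeas
  rcases le_or_gt |x| q with h | h
  · rw [etaSoft_of_le h] at *
    simpa using hne
  · rcases lt_trichotomy x 0 with hx | hx | hx
    · rw [etaSoft_neg hx h] at *
      rw [abs_of_neg hx] at h
      have hb : b < x + q := lt_of_le_of_ne (by linarith) hne
      rw [abs_of_neg (by linarith), abs_of_neg (by linarith : b < 0)]
      linarith
    · simp [hx, abs_of_nonneg hq.le] at h; linarith
    · rw [etaSoft_pos hx h] at *
      rw [abs_of_pos hx] at h
      have hb : x - q < b := lt_of_le_of_ne (by linarith) (Ne.symm hne)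
      rw [abs_of_pos (by linarith), abs_of_pos (by linarith : 0 < b)]
      linarith

/-- Variational characterization of wavelet soft-thresholding: given an orthonormal basis
`(φ_λ)_{λ∈Λ}` of `ℝ^n`, data `Y`, thresholds `q_λ > 0` and `r ∈ (0, ∞)`, the estimator
`β̂ = Σ_λ η^soft(⟨φ_λ, Y⟩, q_λ) φ_λ` is the unique solution of:
minimize `Σ_λ |⟨φ_λ, β⟩|^r` subject to `max_λ |⟨φ_λ, Y − β⟩| / q_λ ≤ 1`. -/
theorem soft_thresholding_variational {n : ℕ} {Λ : Type*} [Fintype Λ]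
    (φ : OrthonormalBasis Λ ℝ (EuclideanSpace ℝ (Fin n)))
    (Y : EuclideanSpace ℝ (Fin n)) (q : Λ → ℝ) (hq : ∀ l, 0 < q l)
    (r : ℝ) (hr : 0 < r)
    (βhat : EuclideanSpace ℝ (Fin n))
    (hβhat : βhat = ∑ l : Λ, etaSoft (inner ℝ (φ l) Y : ℝ) (q l) • φ l) :
    (∀ l : Λ, |(inner ℝ (φ l) (Y - βhat) : ℝ)| / q l ≤ 1) ∧
    ∀ β : EuclideanSpace ℝ (Fin n),
      (∀ l : Λ, |(inner ℝ (φ l) (Y - β) : ℝ)| / q l ≤ 1) → β ≠ βhat →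
      (∑ l : Λ, |(inner ℝ (φ l) βhat : ℝ)| ^ r) < ∑ l : Λ, |(inner ℝ (φ l) β : ℝ)| ^ r := by
  have hcoord : ∀ l : Λ, (inner ℝ (φ l) βhat : ℝ) = etaSoft (inner ℝ (φ l) Y : ℝ) (q l) := by
    intro l
    rw [hβhat]
    exact φ.orthonormal.inner_right_fintype _ l
  constructor
  · intro l
    rw [div_le_one (hq l), inner_sub_right, hcoord l]
    exact etaSoft_feas (hq l)
  · intro β hfeas hne
    have hfeas' : ∀ l : Λ, |(inner ℝ (φ l) Y : ℝ) - inner ℝ (φ l) β| ≤ q l := by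
      intro l
      have := hfeas l
      rw [div_le_one (hq l), inner_sub_right] at this
      exact this
    have hle : ∀ l : Λ, |(inner ℝ (φ l) βhat : ℝ)| ^ r ≤ |(inner ℝ (φ l) β : ℝ)| ^ r := by
      intro l
      rcases eq_or_ne ((inner ℝ (φ l) β : ℝ)) (etaSoft (inner ℝ (φ l) Y : ℝ) (q l)) with h | h
      · rw [hcoord l, h]
      · have := etaSoft_min (hq l) (hfeas' l) h
        rw [hcoord l]
        exact le_of_lt (Real.rpow_lt_rpow (abs_nonneg _) this hr)
    have hex : ∃ l : Λ, (inner ℝ (φ l) β : ℝ) ≠ inner ℝ (φ l) βhat := by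
      by_contra hc
      push_neg at hc
      have heq : φ.repr β = φ.repr βhat := by
        ext l
        rw [φ.repr_apply_apply, φ.repr_apply_apply]
        exact hc l
      exact hne (φ.repr.injective heq)
    obtain ⟨l, hl⟩ := hex
    have hstrict : |(inner ℝ (φ l) βhat : ℝ)| ^ r < |(inner ℝ (φ l) β : ℝ)| ^ r := by
      have h : (inner ℝ (φ l) β : ℝ) ≠ etaSoft (inner ℝ (φ l) Y : ℝ) (q l) := by
        rw [← hcoord l]; exact hl
      have := etaSoft_min (hq l) (hfeas' l) h
      rw [hcoord l]
      exact Real.rpow_lt_rpow (abs_nonneg _) this hr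
    exact Finset.sum_lt_sum (fun i _ => hle i) ⟨l, Finset.mem_univ l, hstrict⟩
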